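/- The function F̂ defined on {(t₁,t₂,t₃) ∈ ℝ³ : t₂ > 0} by F̂(t₁,t₂,t₃) = (1/2)t₁t₃² + (1/2)t₂²t₃ + (1/2)t₁²·log t₂ satisfies the WDVV associativity equations: with η_{αβ} = ∂³F̂/∂t₃∂t_α∂t_β (the constant matrix with η₁₃ = η₃₁ = 1, η₂₂ = 1, other entries 0) and inverse η^{αβ}, one has Σ_{μ,ν} (∂³F̂/∂t_α∂t_β∂t_μ)·η^{μν}·(∂³F̂/∂t_ν∂t_γ∂t_δ) = Σ_{μ,ν} (∂³F̂/∂t_δ∂t_β∂t_μ)·η^{μν}·(∂³F̂/∂t_ν∂t_γ∂t_α) for all indices α,β,γ,δ ∈ {1,2,3} and all points with t₂ > 0. -/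

import Mathlib

open Real

/-- Partial derivative of a function of `n` real variables in the `i`-th coordinate
direction. -/
noncomputable def pd {n : ℕ} (i : Fin n) (f : (Fin n → ℝ) → ℝ) : (Fin n → ℝ) → ℝ :=
  fun t => fderiv ℝ f t (Pi.single i 1)

/-- The Legendre transform `S₃` of the `W̃⁽¹⁾(A₂)` prepotential:
`F̂ = ½t₁t₃² + ½t₂²t₃ + ½t₁² log t₂`, defined for `t₂ > 0`. -/
noncomputable def Fhat3 : (Fin 3 → ℝ) → ℝ :=
  fun t => (1/2) * t 0 * (t 2)^2 + (1/2) * (t 1)^2 * t 2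
    + (1/2) * (t 0)^2 * Real.log (t 1)


lemma pd_eq {n} {f : (Fin n → ℝ) → ℝ} {L : (Fin n → ℝ) →L[ℝ] ℝ} {t} (i : Fin n)
    (h : HasFDerivAt f L t) :
    pd i f t = L (Pi.single i 1) := by unfold pd; rw [h.fderiv]

lemma pd_congr {n} {f g : (Fin n → ℝ) → ℝ} {t} (i : Fin n) (h : f =ᶠ[nhds t] g) :
    pd i f t = pd i g t := by unfold pd; rw [h.fderiv_eq]

lemma hasF_coord {n} (i : Fin n) (t : Fin n → ℝ) :
    HasFDerivAt (fun t : Fin n → ℝ => t i)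
      (ContinuousLinearMap.proj (R := ℝ) (φ := fun _ : Fin n => ℝ) i) t :=
  by exact (ContinuousLinearMap.proj (R := ℝ) (φ := fun _ : Fin n => ℝ) i).hasFDerivAt (x := t)

noncomputable def d1 : Fin 3 → (Fin 3 → ℝ) → ℝ := fun i t =>
  match i.val with
  | 0 => (1/2) * (t 2)^2 + t 0 * Real.log (t 1)
  | 1 => t 1 * t 2 + (1/2) * (t 0)^2 / t 1
  | _ => t 0 * t 2 + (1/2) * (t 1)^2

noncomputable def d2 : Fin 3 → Fin 3 → (Fin 3 → ℝ) → ℝ := fun i j t =>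
  match i.val, j.val with
  | 0, 0 => Real.log (t 1)
  | 0, 1 | 1, 0 => t 0 / t 1
  | 0, 2 | 2, 0 => t 2
  | 1, 1 => t 2 - (1/2) * (t 0)^2 / (t 1)^2
  | 1, 2 | 2, 1 => t 1
  | _, _ => t 0

noncomputable def c3 (x y : ℝ) (i j k : Fin 3) : ℝ :=
  match i.val, j.val, k.val with
  | 0,0,1 | 0,1,0 | 1,0,0 => 1/y
  | 0,1,1 | 1,0,1 | 1,1,0 => -x/y^2
  | 0,2,2 | 2,0,2 | 2,2,0 => 1
  | 1,1,1 => x^2/y^3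
  | 1,1,2 | 1,2,1 | 2,1,1 => 1
  | _,_,_ => 0

lemma stepA (i : Fin 3) (t : Fin 3 → ℝ) (h : 0 < t 1) : pd i Fhat3 t = d1 i t := by
  have hF : HasFDerivAt Fhat3 _ t :=
    ((((hasF_coord 0 t).const_mul ((1:ℝ)/2)).mul ((hasDerivAt_pow 2 (t 2)).comp_hasFDerivAt t (hasF_coord 2 t))).add
      ((((hasDerivAt_pow 2 (t 1)).comp_hasFDerivAt t (hasF_coord 1 t)).const_mul ((1:ℝ)/2)).mul (hasF_coord 2 t))).add
      ((((hasDerivAt_pow 2 (t 0)).comp_hasFDerivAt t (hasF_coord 0 t)).const_mul ((1:ℝ)/2)).mul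
        (((Real.hasDerivAt_log h.ne').comp_hasFDerivAt t (hasF_coord 1 t) : HasFDerivAt (Real.log ∘ fun s : Fin 3 → ℝ => s 1) _ t)))
  rw [pd_eq i hF]
  fin_cases i <;> simp [d1, Pi.single_apply] <;> ring

lemma stepB (i j : Fin 3) (t : Fin 3 → ℝ) (h : 0 < t 1) : pd i (d1 j) t = d2 i j t := by
  fin_cases j
  · have hF : HasFDerivAt (d1 0) _ t :=
      (((hasDerivAt_pow 2 (t 2)).comp_hasFDerivAt t (hasF_coord 2 t)).const_mul ((1:ℝ)/2)).add
        ((hasF_coord 0 t).mul (((Real.hasDerivAt_log h.ne').comp_hasFDerivAt t (hasF_coord 1 t) : HasFDerivAt (Real.log ∘ fun s : Fin 3 → ℝ => s 1) _ t)))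
    rw [show (⟨0, by norm_num⟩ : Fin 3) = 0 from rfl, pd_eq i hF]
    fin_cases i <;> simp [d2, Pi.single_apply] <;> ring
  · have hF : HasFDerivAt (d1 1) _ t :=
      ((hasF_coord 1 t).mul (hasF_coord 2 t)).add
        ((((hasDerivAt_pow 2 (t 0)).comp_hasFDerivAt t (hasF_coord 0 t)).const_mul
          ((1:ℝ)/2)).mul ((hasDerivAt_inv h.ne').comp_hasFDerivAt t (hasF_coord 1 t)))
    rw [show (⟨1, by norm_num⟩ : Fin 3) = 1 from rfl, pd_eq i hF]
    fin_cases i <;> simp [d2, Pi.single_apply] <;> (try (field_simp; try ring))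
  · have hF : HasFDerivAt (d1 2) _ t :=
      ((hasF_coord 0 t).mul (hasF_coord 2 t)).add
        (((hasDerivAt_pow 2 (t 1)).comp_hasFDerivAt t (hasF_coord 1 t)).const_mul ((1:ℝ)/2))
    rw [show (⟨2, by norm_num⟩ : Fin 3) = 2 from rfl, pd_eq i hF]
    fin_cases i <;> simp [d2, Pi.single_apply] <;> ring

lemma stepC (i j k : Fin 3) (t : Fin 3 → ℝ) (h : 0 < t 1) :
    pd i (d2 j k) t = c3 (t 0) (t 1) i j k := by
  have hlog : HasFDerivAt (d2 0 0) _ t :=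
    ((Real.hasDerivAt_log h.ne').comp_hasFDerivAt t (hasF_coord 1 t) : HasFDerivAt (Real.log ∘ fun s : Fin 3 → ℝ => s 1) _ t)
  have hdiv : HasFDerivAt (d2 0 1) _ t :=
    (hasF_coord 0 t).mul ((hasDerivAt_inv h.ne').comp_hasFDerivAt t (hasF_coord 1 t))
  have h11 : HasFDerivAt (d2 1 1) _ t :=
    (hasF_coord 2 t).sub
      ((((hasDerivAt_pow 2 (t 0)).comp_hasFDerivAt t (hasF_coord 0 t)).const_mul ((1:ℝ)/2)).mul
        ((hasDerivAt_inv (pow_ne_zero 2 h.ne')).comp_hasFDerivAt t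
          ((hasDerivAt_pow 2 (t 1)).comp_hasFDerivAt t (hasF_coord 1 t) : HasFDerivAt ((fun x : ℝ => x ^ 2) ∘ fun s : Fin 3 → ℝ => s 1) _ t)))
  have hc0 : HasFDerivAt (d2 2 2) _ t := hasF_coord 0 t
  have hc1 : HasFDerivAt (d2 1 2) _ t := hasF_coord 1 t
  have hc2 : HasFDerivAt (d2 0 2) _ t := hasF_coord 2 t
  fin_cases j <;> fin_cases k <;>
    [rw [show (⟨0, by norm_num⟩ : Fin 3) = 0 from rfl, pd_eq i hlog];
     rw [show (⟨0, by norm_num⟩ : Fin 3) = 0 from rfl,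
        show (⟨1, by norm_num⟩ : Fin 3) = 1 from rfl, pd_eq i hdiv];
     rw [show (⟨0, by norm_num⟩ : Fin 3) = 0 from rfl,
        show (⟨2, by norm_num⟩ : Fin 3) = 2 from rfl, pd_eq i hc2];
     rw [show (⟨0, by norm_num⟩ : Fin 3) = 0 from rfl,
        show (⟨1, by norm_num⟩ : Fin 3) = 1 from rfl,
        pd_eq i (show HasFDerivAt (d2 1 0) _ t from hdiv)];
     rw [show (⟨1, by norm_num⟩ : Fin 3) = 1 from rfl, pd_eq i h11];
     rw [show (⟨1, by norm_num⟩ : Fin 3) = 1 from rfl,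
        show (⟨2, by norm_num⟩ : Fin 3) = 2 from rfl, pd_eq i hc1];
     rw [show (⟨0, by norm_num⟩ : Fin 3) = 0 from rfl,
        show (⟨2, by norm_num⟩ : Fin 3) = 2 from rfl,
        pd_eq i (show HasFDerivAt (d2 2 0) _ t from hc2)];
     rw [show (⟨1, by norm_num⟩ : Fin 3) = 1 from rfl,
        show (⟨2, by norm_num⟩ : Fin 3) = 2 from rfl,
        pd_eq i (show HasFDerivAt (d2 2 1) _ t from hc1)];
     rw [show (⟨2, by norm_num⟩ : Fin 3) = 2 from rfl, pd_eq i hc0]] <;>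
  fin_cases i <;> simp [c3, Pi.single_apply] <;> (try (field_simp; try ring))

lemma secondD (β μ : Fin 3) (t : Fin 3 → ℝ) (h : 0 < t 1) :
    pd β (pd μ Fhat3) t = d2 β μ t := by
  have hop : IsOpen {s : Fin 3 → ℝ | 0 < s 1} := isOpen_lt continuous_const (continuous_apply 1)
  have e1 : pd μ Fhat3 =ᶠ[nhds t] d1 μ :=
    Filter.eventually_of_mem (hop.mem_nhds h) (fun s hs => stepA μ s hs)
  rw [pd_congr β e1, stepB β μ t h]

lemma thirdD (α β μ : Fin 3) (t : Fin 3 → ℝ) (h : 0 < t 1) :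
    pd α (pd β (pd μ Fhat3)) t = c3 (t 0) (t 1) α β μ := by
  have hop : IsOpen {s : Fin 3 → ℝ | 0 < s 1} := isOpen_lt continuous_const (continuous_apply 1)
  have e2 : pd β (pd μ Fhat3) =ᶠ[nhds t] d2 β μ :=
    Filter.eventually_of_mem (hop.mem_nhds h) (fun s hs => secondD β μ s hs)
  rw [pd_congr α e2, stepC α β μ t h]

set_option maxHeartbeats 2000000 in
lemma key (x y : ℝ) (hy : y ≠ 0) (a b g d : Fin 3) :
    c3 x y a b 0 * c3 x y 2 g d + c3 x y a b 1 * c3 x y 1 g d +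
      c3 x y a b 2 * c3 x y 0 g d =
    c3 x y d b 0 * c3 x y 2 g a + c3 x y d b 1 * c3 x y 1 g a +
      c3 x y d b 2 * c3 x y 0 g a := by
  fin_cases a <;> fin_cases b <;> fin_cases g <;> fin_cases d <;>
    norm_num [c3] <;> (try (field_simp; try ring)) <;> try tauto

/-- The prepotential `F̂ = ½t₁t₃² + ½t₂²t₃ + ½t₁² log t₂` satisfies the WDVV
associativity equations on `{t₂ > 0}`: `η_{αβ} = ∂³F̂/∂t₃∂t_α∂t_β` is the constant
matrix with `η₁₃ = η₃₁ = η₂₂ = 1` (other entries `0`), which is its own inverse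
`η^{αβ}`, and `Σ_{μν} F̂_{αβμ} η^{μν} F̂_{νγδ} = Σ_{μν} F̂_{δβμ} η^{μν} F̂_{νγα}`. -/
theorem WDVV_S3_tildeW1_A2 :
    (∀ t : Fin 3 → ℝ, 0 < t 1 → ∀ α β : Fin 3,
      pd 2 (pd α (pd β Fhat3)) t
        = (!![0, 0, 1; 0, 1, 0; 1, 0, 0] : Matrix (Fin 3) (Fin 3) ℝ) α β) ∧
    (∀ t : Fin 3 → ℝ, 0 < t 1 → ∀ α β γ δ : Fin 3,
      (∑ μ, ∑ ν, pd α (pd β (pd μ Fhat3)) t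
          * (!![0, 0, 1; 0, 1, 0; 1, 0, 0] : Matrix (Fin 3) (Fin 3) ℝ) μ ν
          * pd ν (pd γ (pd δ Fhat3)) t)
        = ∑ μ, ∑ ν, pd δ (pd β (pd μ Fhat3)) t
          * (!![0, 0, 1; 0, 1, 0; 1, 0, 0] : Matrix (Fin 3) (Fin 3) ℝ) μ ν
          * pd ν (pd γ (pd α Fhat3)) t) := by
  constructor
  · intro t h α β
    rw [thirdD 2 α β t h]
    fin_cases α <;> fin_cases β <;> norm_num [c3, Matrix.vecHead, Matrix.vecTail]
  · intro t h α β γ δ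
    have T : ∀ a b c : Fin 3, pd a (pd b (pd c Fhat3)) t = c3 (t 0) (t 1) a b c :=
      fun a b c => thirdD a b c t h
    simp only [T, Fin.sum_univ_three]
    norm_num [Matrix.cons_val', Matrix.cons_val_zero, Matrix.cons_val_one, Matrix.head_cons,
      Matrix.empty_val', Matrix.cons_val_fin_one, Matrix.head_fin_const, Matrix.vecHead,
      Matrix.vecTail, Matrix.cons_val]
    have K := key (t 0) (t 1) h.ne' α β γ δ
    simp [Matrix.vecHead, Matrix.vecTail, Function.comp_def]
    linarith
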